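/- For every k ≥ 4, every P_k-free graph G with χ(G) ≥ 2 has a vertex v with χ(N_G(v)) ≥ χ(G)/(k−2). -/

import Mathlib

open SimpleGraph

/-- The chromatic number of the subgraph of `G` induced on `S`, as a natural number. -/
noncomputable def chiSet {V : Type*} (G : SimpleGraph V) (S : Set V) : ℕ :=
  (G.induce S).chromaticNumber.toNat

/-- The chromatic number of `G`, as a natural number. -/
noncomputable def chi {V : Type*} (G : SimpleGraph V) : ℕ :=
  G.chromaticNumber.toNat

/-- `(A, B)` is an anticomplete pair: no edge of `G` joins `A` and `B`. -/
def Anticomplete {V : Type*} (G : SimpleGraph V) (A B : Set V) : Prop :=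
  ∀ a ∈ A, ∀ b ∈ B, ¬ G.Adj a b

/-- `G` is `H`-free: no induced subgraph of `G` is isomorphic to `H`. -/
def FreeOf {V W : Type*} (G : SimpleGraph V) (H : SimpleGraph W) : Prop :=
  IsEmpty (H ↪g G)

namespace Stmt4Aux

variable {V : Type*} (G : SimpleGraph V)

/-- A bounded proper colouring of the set `S` with `n` colours. -/
def Bcol (S : Set V) (n : ℕ) : Prop :=
  ∃ f : V → ℕ, (∀ a ∈ S, f a < n) ∧ ∀ a ∈ S, ∀ b ∈ S, G.Adj a b → f a ≠ f b

/-- A single adjacency step inside `S`. -/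
def Stp (S : Set V) (a b : V) : Prop := a ∈ S ∧ b ∈ S ∧ G.Adj a b

/-- Reachability inside `S`. -/
def Rch (S : Set V) (a b : V) : Prop := Relation.ReflTransGen (Stp G S) a b

/-- The connected component of `x` inside `S`. -/
def comp (S : Set V) (x : V) : Set V := {y | Rch G S x y}

variable {G}

lemma stp_symm {S : Set V} {a b : V} (h : Stp G S a b) : Stp G S b a :=
  ⟨h.2.1, h.1, h.2.2.symm⟩

lemma rch_symm {S : Set V} {a b : V} (h : Rch G S a b) : Rch G S b a :=
  by
  induction h with
  | refl => exact Relation.ReflTransGen.refl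
  | tail _ h2 ih => exact Relation.ReflTransGen.head (stp_symm h2) ih

lemma mem_of_rch {S : Set V} {x y : V} (hx : x ∈ S) (h : Rch G S x y) : y ∈ S := by
  induction h with
  | refl => exact hx
  | tail _ h2 _ => exact h2.2.1

lemma comp_subset {S : Set V} {x : V} (hx : x ∈ S) : comp G S x ⊆ S :=
  fun _ hy => mem_of_rch hx hy

lemma mem_comp_self {S : Set V} (x : V) : x ∈ comp G S x := Relation.ReflTransGen.refl

lemma comp_eq_of_rch {S : Set V} {x y : V} (h : Rch G S x y) : comp G S x = comp G S y := by
  ext z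
  exact ⟨fun hz => (rch_symm h).trans hz, fun hz => h.trans hz⟩

lemma rch_comp {S : Set V} {x y : V} (h : Rch G S x y) : Rch G (comp G S x) x y := by
  induction h with
  | refl => exact Relation.ReflTransGen.refl
  | tail h1 h2 ih =>
      exact ih.tail ⟨h1, h1.tail h2, h2.2.2⟩

lemma comp_connected {S : Set V} {x : V} (_ : x ∈ S) :
    ∀ a ∈ comp G S x, ∀ b ∈ comp G S x, Rch G (comp G S x) a b := by
  intro a ha b hb
  exact (rch_symm (rch_comp ha)).trans (rch_comp hb)

lemma comp_eq_singleton {S : Set V} {x : V} (h : ∀ c ∈ S, ¬ G.Adj x c) :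
    comp G S x = {x} := by
  ext z
  constructor
  · intro hz
    rcases Relation.ReflTransGen.cases_head hz with h1 | ⟨c, hstep, _⟩
    · exact h1.symm
    · exact absurd hstep.2.2 (h c hstep.2.1)
  · rintro rfl
    exact mem_comp_self z

lemma bcol_mono_set {S T : Set V} {n : ℕ} (hST : S ⊆ T) (h : Bcol G T n) : Bcol G S n := by
  obtain ⟨f, h1, h2⟩ := h
  exact ⟨f, fun a ha => h1 a (hST ha), fun a ha b hb => h2 a (hST ha) b (hST hb)⟩

lemma bcol_mono_nat {S : Set V} {m n : ℕ} (hmn : m ≤ n) (h : Bcol G S m) : Bcol G S n := by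
  obtain ⟨f, h1, h2⟩ := h
  exact ⟨f, fun a ha => lt_of_lt_of_le (h1 a ha) hmn, h2⟩

lemma bcol_singleton (G : SimpleGraph V) (p : V) : Bcol G {p} 1 := by
  refine ⟨fun _ => 0, fun a _ => Nat.zero_lt_one, ?_⟩
  intro a ha b hb hab
  rw [Set.eq_of_mem_singleton ha, Set.eq_of_mem_singleton hb] at hab
  exact absurd hab (G.loopless.irrefl p)

lemma bcol_union {A B : Set V} {a b : ℕ} (hA : Bcol G A a) (hB : Bcol G B b) :
    Bcol G (A ∪ B) (a + b) := by
  classical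
  obtain ⟨f, hf1, hf2⟩ := hA
  obtain ⟨g, hg1, hg2⟩ := hB
  refine ⟨fun v => if v ∈ A then f v else a + g v, ?_, ?_⟩
  · intro x hx
    by_cases hxA : x ∈ A
    · simp only [if_pos hxA]; have := hf1 x hxA; omega
    · simp only [if_neg hxA]
      have hxB : x ∈ B := hx.resolve_left hxA
      have := hg1 x hxB; omega
  · intro x hx y hy hxy
    by_cases hxA : x ∈ A <;> by_cases hyA : y ∈ A
    · simp only [if_pos hxA, if_pos hyA]; exact hf2 x hxA y hyA hxy
    · simp only [if_pos hxA, if_neg hyA]; have := hf1 x hxA; omega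
    · simp only [if_neg hxA, if_pos hyA]; have := hf1 y hyA; omega
    · simp only [if_neg hxA, if_neg hyA]
      have h := hg2 x (hx.resolve_left hxA) y (hy.resolve_left hyA) hxy
      omega

lemma bcol_components {S : Set V} {n : ℕ} (h : ∀ x ∈ S, Bcol G (comp G S x) n) :
    Bcol G S n := by
  classical
  have pickSpec : ∀ T : Set V, Bcol G T n →
      (∀ a ∈ T, (if hT : Bcol G T n then hT.choose else fun _ => 0) a < n) ∧
      ∀ a ∈ T, ∀ b ∈ T, G.Adj a b →
        (if hT : Bcol G T n then hT.choose else fun _ => 0) a ≠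
        (if hT : Bcol G T n then hT.choose else fun _ => 0) b := by
    intro T hT
    rw [dif_pos hT]
    exact hT.choose_spec
  refine ⟨fun v => (if hT : Bcol G (comp G S v) n then hT.choose else fun _ => 0) v, ?_, ?_⟩
  · intro x hx
    exact (pickSpec _ (h x hx)).1 x (mem_comp_self x)
  · intro x hx y hy hxy
    have hcomp : comp G S x = comp G S y :=
      comp_eq_of_rch (Relation.ReflTransGen.single ⟨hx, hy, hxy⟩)
    have hy' : y ∈ comp G S x := Relation.ReflTransGen.single ⟨hx, hy, hxy⟩
    rw [show (fun v => (if hT : Bcol G (comp G S v) n then hT.choose else fun _ => 0) v) y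
        = (if hT : Bcol G (comp G S x) n then hT.choose else fun _ => 0) y by
      simp only [hcomp]]
    exact (pickSpec _ (h x hx)).2 x (mem_comp_self x) y hy' hxy

lemma exit {S A : Set V} {x y : V} (hxA : x ∈ A) (_hAS : A ⊆ S)
    (h : Rch G S x y) (hy : y ∉ A) :
    ∃ d w, d ∈ comp G A x ∧ w ∈ S ∧ w ∉ A ∧ G.Adj d w := by
  have key : ∀ z, Rch G S z y → z ∈ comp G A x →
      ∃ d w, d ∈ comp G A x ∧ w ∈ S ∧ w ∉ A ∧ G.Adj d w := by
    intro z hz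
    induction hz using Relation.ReflTransGen.head_induction_on with
    | refl =>
        intro hzc
        exact absurd (comp_subset hxA hzc) hy
    | head step rest ih =>
        rename_i a c
        intro hamem
        by_cases hcA : c ∈ A
        · exact ih (hamem.tail ⟨comp_subset hxA hamem, hcA, step.2.2⟩)
        · exact ⟨a, c, hamem, step.2.1, hcA, step.2.2⟩
  exact key x h (mem_comp_self x)

/-- An induced path `f 0, f 1, …, f j` with `f 0 = p` and the rest in `C`. -/
def GoodPath (G : SimpleGraph V) (p : V) (C : Set V) (j : ℕ) : Prop :=
  ∃ f : ℕ → V, f 0 = p ∧ (∀ i, 1 ≤ i → i ≤ j → f i ∈ C) ∧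
    (∀ i ≤ j, ∀ i' ≤ j, f i = f i' → i = i') ∧
    (∀ i ≤ j, ∀ i' ≤ j, (G.Adj (f i) (f i') ↔ (i' = i + 1 ∨ i = i' + 1)))

lemma goodPath_mono {p : V} {C C' : Set V} {j : ℕ} (hCC : C ⊆ C')
    (h : GoodPath G p C j) : GoodPath G p C' j := by
  obtain ⟨f, h0, hmem, hinj, hadj⟩ := h
  exact ⟨f, h0, fun i h1 h2 => hCC (hmem i h1 h2), hinj, hadj⟩

lemma prepend {p w : V} {D : Set V} {j : ℕ}
    (hpw : G.Adj p w) (hpD : p ∉ D) (hpw' : p ≠ w)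
    (hpN : ∀ d ∈ D, ¬ G.Adj p d) (h : GoodPath G w D j) :
    GoodPath G p ({w} ∪ D) (j + 1) := by
  classical
  obtain ⟨f, h0, hmem, hinj, hadj⟩ := h
  refine ⟨fun i => if i = 0 then p else f (i - 1), by simp, ?_, ?_, ?_⟩
  · intro i hi1 hi2
    have hne : i ≠ 0 := by omega
    simp only [if_neg hne]
    rcases Nat.eq_or_lt_of_le hi1 with h1 | h1
    · rw [show i - 1 = 0 by omega, h0]; exact Or.inl rfl
    · exact Or.inr (hmem (i - 1) (by omega) (by omega))
  · intro i hi i' hi' hEq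
    by_cases h1 : i = 0 <;> by_cases h2 : i' = 0
    · omega
    · exfalso
      simp only [if_pos h1, if_neg h2] at hEq
      rcases Nat.eq_or_lt_of_le (Nat.one_le_iff_ne_zero.mpr h2) with h3 | h3
      · rw [show i' - 1 = 0 by omega, h0] at hEq; exact hpw' hEq
      · exact hpD (hEq ▸ hmem (i' - 1) (by omega) (by omega))
    · exfalso
      simp only [if_neg h1, if_pos h2] at hEq
      rcases Nat.eq_or_lt_of_le (Nat.one_le_iff_ne_zero.mpr h1) with h3 | h3
      · rw [show i - 1 = 0 by omega, h0] at hEq; exact hpw' hEq.symm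
      · exact hpD (hEq ▸ hmem (i - 1) (by omega) (by omega))
    · simp only [if_neg h1, if_neg h2] at hEq
      have := hinj (i - 1) (by omega) (i' - 1) (by omega) hEq
      omega
  · intro i hi i' hi'
    by_cases h1 : i = 0 <;> by_cases h2 : i' = 0
    · simp only [if_pos h1, if_pos h2]
      exact iff_of_false (G.loopless.irrefl p) (by omega)
    · simp only [if_pos h1, if_neg h2]
      rcases Nat.eq_or_lt_of_le (Nat.one_le_iff_ne_zero.mpr h2) with h3 | h3
      · rw [show i' - 1 = 0 by omega, h0]
        exact iff_of_true hpw (by omega)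
      · refine iff_of_false (hpN _ (hmem (i' - 1) (by omega) (by omega))) (by omega)
    · simp only [if_neg h1, if_pos h2]
      rcases Nat.eq_or_lt_of_le (Nat.one_le_iff_ne_zero.mpr h1) with h3 | h3
      · rw [show i - 1 = 0 by omega, h0]
        exact iff_of_true hpw.symm (by omega)
      · refine iff_of_false (fun hh => hpN _ (hmem (i - 1) (by omega) (by omega)) hh.symm)
          (by omega)
    · simp only [if_neg h1, if_neg h2]
      rw [hadj (i - 1) (by omega) (i' - 1) (by omega)]
      omega

lemma false_of_goodPath {k : ℕ} (hk : 1 ≤ k) (hG : FreeOf G (pathGraph k))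
    {p : V} {C : Set V} (h : GoodPath G p C (k - 1)) : False := by
  obtain ⟨f, -, -, hinj, hadj⟩ := h
  refine hG.false ?_
  refine ⟨⟨fun i => f i.val, fun u v huv => ?_⟩, ?_⟩
  · exact Fin.ext (hinj u.val (by omega) v.val (by omega) huv)
  · intro u v
    show G.Adj (f u.val) (f v.val) ↔ (pathGraph k).Adj u v
    rw [pathGraph_adj, hadj u.val (by omega) v.val (by omega)]
    omega

/-- The key Gyárfás-type lemma. -/
lemma main (G : SimpleGraph V) (m : ℕ) (hm : ∀ u : V, Bcol G (G.neighborSet u) m) :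
    ∀ j, 1 ≤ j → ∀ C : Set V, ∀ p : V,
      (∀ a ∈ C, ∀ b ∈ C, Rch G C a b) → p ∉ C → (∃ c ∈ C, G.Adj p c) →
      ¬ GoodPath G p C j → Bcol G C ((j - 1) * m) := by
  intro j
  induction j with
  | zero => omega
  | succ n ih =>
    intro _ C p hconn hpC hnb hnp
    obtain ⟨c₀, hc₀C, hpc₀⟩ := hnb
    rcases Nat.eq_zero_or_pos n with hn0 | hn1
    · -- base case j = 1: a good path of length 1 always exists, contradiction
      subst hn0
      exfalso
      apply hnp
      refine ⟨fun i => if i = 0 then p else c₀, by simp, ?_, ?_, ?_⟩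
      · intro i h1 h2
        have hne : i ≠ 0 := by omega
        simp only [if_neg hne]; exact hc₀C
      · intro i hi i' hi' hEq
        have hcne : p ≠ c₀ := fun hh => hpC (hh ▸ hc₀C)
        interval_cases i <;> interval_cases i'
        · rfl
        · exact absurd hEq hcne
        · exact absurd hEq hcne.symm
        · rfl
      · intro i hi i' hi'
        interval_cases i <;> interval_cases i'
        · exact iff_of_false (G.loopless.irrefl p) (by omega)
        · exact iff_of_true hpc₀ (by omega)
        · exact iff_of_true hpc₀.symm (by omega)
        · exact iff_of_false (G.loopless.irrefl c₀) (by omega)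
    · -- inductive step
      set A := C \ G.neighborSet p with hA
      have hAC : A ⊆ C := Set.diff_subset
      have hcolA : Bcol G A ((n - 1) * m) := by
        apply bcol_components
        intro y hyA
        have hyC : y ∈ C := hAC hyA
        have hchain : Rch G C y c₀ := hconn y hyC c₀ hc₀C
        have hc₀A : c₀ ∉ A := fun hh => hh.2 hpc₀
        obtain ⟨d, w, hdD, hwC, hwA, hdw⟩ := exit hyA hAC hchain hc₀A
        have hwN : G.Adj p w := by
          by_contra hcon
          exact hwA ⟨hwC, hcon⟩
        have hDA : comp G A y ⊆ A := comp_subset hyA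
        refine ih hn1 (comp G A y) w (comp_connected hyA)
          (fun hh => hwA (hDA hh)) ⟨d, hdD, hdw.symm⟩ ?_
        intro hgp
        apply hnp
        refine goodPath_mono ?_ (prepend hwN (fun hh => hpC (hAC (hDA hh)))
          (fun hh => hpC (hh ▸ hwC)) (fun d' hd' hadj => (hDA hd').2 hadj) hgp)
        exact Set.union_subset (by simpa using hwC) (hDA.trans hAC)
      have hcolN : Bcol G (C ∩ G.neighborSet p) m :=
        bcol_mono_set Set.inter_subset_right (hm p)
      have hun := bcol_union hcolN hcolA
      rw [Set.inter_union_diff] at hun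
      refine bcol_mono_nat (le_of_eq ?_) hun
      obtain ⟨t, rfl⟩ : ∃ t, n = t + 1 := ⟨n - 1, by omega⟩
      rw [Nat.add_sub_cancel, Nat.add_sub_cancel, Nat.succ_mul, Nat.add_comm]

lemma chi_le_of_bcol [Fintype V] {n : ℕ} (h : Bcol G Set.univ n) : chi G ≤ n := by
  obtain ⟨f, h1, h2⟩ := h
  have hcol : G.Colorable n := by
    refine ⟨SimpleGraph.Coloring.mk (fun v => ⟨f v, h1 v (Set.mem_univ v)⟩) ?_⟩
    intro a b hab hEq
    have hfe : f a = f b := congrArg Fin.val hEq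
    exact h2 a (Set.mem_univ a) b (Set.mem_univ b) hab hfe
  have := SimpleGraph.chromaticNumber_le_iff_colorable.mpr hcol
  exact ENat.toNat_le_of_le_coe this

lemma bcol_of_chiSet [Fintype V] (G : SimpleGraph V) (S : Set V) :
    Bcol G S (chiSet G S) := by
  classical
  have hcol : (G.induce S).Colorable (chiSet G S) :=
    (G.induce S).colorable_chromaticNumber_of_fintype
  obtain ⟨c⟩ := hcol
  refine ⟨fun v => if h : v ∈ S then (c ⟨v, h⟩).val else 0, ?_, ?_⟩
  · intro a ha
    simp only [dif_pos ha]
    exact (c ⟨a, ha⟩).isLt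
  · intro a ha b hb hab hEq
    simp only [dif_pos ha, dif_pos hb] at hEq
    have hadj : (G.induce S).Adj ⟨a, ha⟩ ⟨b, hb⟩ := by
      simp only [comap_adj, Function.Embedding.coe_subtype]
      exact hab
    exact c.valid hadj (Fin.ext hEq)

end Stmt4Aux

open Stmt4Aux

/-- For every `k ≥ 4`, every `P_k`-free graph `G` with `χ(G) ≥ 2` has a
vertex `v` with `χ(N_G(v)) ≥ χ(G) / (k − 2)`. -/
theorem stmt_4 {V : Type*} [Fintype V] (k : ℕ) (hk : 4 ≤ k) (G : SimpleGraph V)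
    (hG : FreeOf G (pathGraph k)) (hchi : 2 ≤ chi G) :
    ∃ v : V, chi G ≤ (k - 2) * chiSet G (G.neighborSet v) := by
  classical
  -- V is nonempty
  have hne : Nonempty V := by
    by_contra hne
    have : Bcol G Set.univ 0 := ⟨fun _ => 0, fun a _ => absurd ⟨a⟩ hne, fun a _ => absurd ⟨a⟩ hne⟩
    have := chi_le_of_bcol this
    omega
  -- there is an edge
  have hedge : ∃ a b : V, G.Adj a b := by
    by_contra hcon
    push_neg at hcon
    have : Bcol G Set.univ 1 :=
      ⟨fun _ => 0, fun a _ => Nat.zero_lt_one, fun a _ b _ hab => absurd hab (hcon a b)⟩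
    have := chi_le_of_bcol this
    omega
  -- vertex with maximal neighborhood chromatic number
  obtain ⟨v₀, -, hmax⟩ := Finset.exists_max_image Finset.univ
    (fun u => chiSet G (G.neighborSet u)) ⟨Classical.arbitrary V, Finset.mem_univ _⟩
  set m := chiSet G (G.neighborSet v₀) with hm_def
  have hm : ∀ u : V, Bcol G (G.neighborSet u) m := fun u =>
    bcol_mono_nat (hmax u (Finset.mem_univ u)) (bcol_of_chiSet G _)
  have hm1 : 1 ≤ m := by
    obtain ⟨a, b, hab⟩ := hedge
    obtain ⟨f, h1, -⟩ := hm a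
    have := h1 b hab
    omega
  -- the main bound
  have hmain : Bcol G Set.univ ((k - 2) * m) := by
    apply bcol_components
    intro x _
    set K := comp G Set.univ x with hK
    have hxK : x ∈ K := mem_comp_self x
    have hKconn : ∀ a ∈ K, ∀ b ∈ K, Rch G K a b := comp_connected (Set.mem_univ x)
    set A := K \ G.neighborSet x with hA
    have hAK : A ⊆ K := Set.diff_subset
    have hxA : x ∈ A := ⟨hxK, fun hh => G.loopless.irrefl x hh⟩
    have hcompx : comp G A x = {x} := comp_eq_singleton (fun c hc => fun hadj => hc.2 hadj)
    have hcolA : Bcol G A ((k - 3) * m) := by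
      apply bcol_components
      intro y hyA
      by_cases hyx : y = x
      · subst hyx
        rw [hcompx]
        have h13 : 1 ≤ (k - 3) * m :=
          Nat.one_le_iff_ne_zero.mpr (Nat.mul_ne_zero (by omega) (by omega))
        exact bcol_mono_nat h13 (bcol_singleton G y)
      · have hxD : x ∉ comp G A y := by
          intro hx
          apply hyx
          have : y ∈ comp G A x := rch_symm hx
          rw [hcompx] at this
          exact this
        have hyK : y ∈ K := hyA.1
        have hchain : Rch G K y x := hKconn y hyK x hxK
        rcases Relation.ReflTransGen.cases_tail hchain with heq | ⟨c, hyc, hcx⟩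
        · exact absurd heq.symm hyx
        · have hcN : c ∈ G.neighborSet x := hcx.2.2.symm
          have hcA : c ∉ A := fun hh => hh.2 hcN
          obtain ⟨d, w, hdD, hwK, hwA, hdw⟩ := exit hyA hAK hyc hcA
          have hwN : G.Adj x w := by
            by_contra hcon
            exact hwA ⟨hwK, hcon⟩
          have hDA : comp G A y ⊆ A := comp_subset hyA
          have hres := main G m hm (k - 2) (by omega) (comp G A y) w
            (comp_connected hyA) (fun hh => hwA (hDA hh)) ⟨d, hdD, hdw.symm⟩ ?_
          · rw [show k - 2 - 1 = k - 3 by omega] at hres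
            exact hres
          · intro hgp
            have h2 := prepend hwN hxD (fun hh => hwA (hh ▸ hxA))
              (fun d' hd' hadj => (hDA hd').2 hadj) hgp
            rw [show k - 2 + 1 = k - 1 by omega] at h2
            exact false_of_goodPath (by omega) hG h2
    have hcolN : Bcol G (K ∩ G.neighborSet x) m :=
      bcol_mono_set Set.inter_subset_right (hm x)
    have hun := bcol_union hcolN hcolA
    rw [Set.inter_union_diff] at hun
    refine bcol_mono_nat (le_of_eq ?_) hun
    rw [show k - 2 = (k - 3) + 1 by omega, Nat.succ_mul, Nat.add_comm]
  exact ⟨v₀, chi_le_of_bcol hmain⟩
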